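/- (Lemma 2 bound.) For any behavior policy μ, λ ∈ [0,1] with λγ < 1, and any Q-function Q, ‖R*_λ Q − Q*‖ ≤ [(γ + λγ)/(1 − λγ)] ‖Q − Q*‖, where R*_λ Q := Q + ∑_{t≥0} (λγ)^t (P^μ)^t (T Q − Q) and Q* is the unique fixed point of T. -/

import Mathlib

open scoped BigOperators

noncomputable section

/-- The operator `P^μ` on Q-functions. -/
def Pop {X A : Type*} [Fintype X] [Fintype A] (P : X → A → X → ℝ) (μ : X → A → ℝ)
    (Q : X × A → ℝ) : X × A → ℝ :=
  fun p => ∑ y : X, ∑ b : A, P p.1 p.2 y * μ y b * Q (y, b)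

/-- The Bellman optimality operator
`(T Q)(x,a) = r(x,a) + γ ∑_{x'} P(x'|x,a) max_{a'} Q(x',a')`. -/
def Topt {X A : Type*} [Fintype X] [Fintype A] [Nonempty A]
    (P : X → A → X → ℝ) (γ : ℝ) (r : X × A → ℝ) (Q : X × A → ℝ) : X × A → ℝ :=
  fun p => r p + γ * ∑ y : X, P p.1 p.2 y * (⨆ b : A, Q (y, b))

/-- The control operator `R*_λ Q = Q + ∑_{t≥0} (λγ)^t (P^μ)^t (T Q − Q)`. -/
def Rstar {X A : Type*} [Fintype X] [Fintype A] [Nonempty A]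
    (P : X → A → X → ℝ) (μ : X → A → ℝ) (γ lam : ℝ) (r : X × A → ℝ)
    (Q : X × A → ℝ) : X × A → ℝ :=
  Q + ∑' t : ℕ, (lam * γ) ^ t • (Pop P μ)^[t] (Topt P γ r Q - Q)

section aux
variable {X A : Type*} [Fintype X] [Fintype A] [Nonempty X] [Nonempty A]

lemma pop_sub (P : X → A → X → ℝ) (μ : X → A → ℝ) (f g : X × A → ℝ) :
    Pop P μ (f - g) = Pop P μ f - Pop P μ g := by
  funext p
  simp only [Pop, Pi.sub_apply, mul_sub, Finset.sum_sub_distrib]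

lemma pop_iter_sub (P : X → A → X → ℝ) (μ : X → A → ℝ) (t : ℕ) (f g : X × A → ℝ) :
    (Pop P μ)^[t] (f - g) = (Pop P μ)^[t] f - (Pop P μ)^[t] g := by
  induction t with
  | zero => simp
  | succ n ih =>
    rw [Function.iterate_succ_apply', Function.iterate_succ_apply',
      Function.iterate_succ_apply', ih, pop_sub]

lemma pop_norm_le (P : X → A → X → ℝ)
    (hP0 : ∀ x a y, 0 ≤ P x a y) (hP1 : ∀ x a, ∑ y : X, P x a y = 1)
    (μ : X → A → ℝ)
    (hμ0 : ∀ x a, 0 ≤ μ x a) (hμ1 : ∀ x, ∑ a : A, μ x a = 1)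
    (f : X × A → ℝ) : ‖Pop P μ f‖ ≤ ‖f‖ := by
  rw [pi_norm_le_iff_of_nonneg (norm_nonneg f)]
  intro p
  rw [Real.norm_eq_abs]
  show |∑ y : X, ∑ b : A, P p.1 p.2 y * μ y b * f (y, b)| ≤ ‖f‖
  calc |∑ y : X, ∑ b : A, P p.1 p.2 y * μ y b * f (y, b)|
      ≤ ∑ y : X, ∑ b : A, |P p.1 p.2 y * μ y b * f (y, b)| := by
        refine (Finset.abs_sum_le_sum_abs _ _).trans ?_
        exact Finset.sum_le_sum fun y _ => Finset.abs_sum_le_sum_abs _ _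
    _ ≤ ∑ y : X, ∑ b : A, P p.1 p.2 y * μ y b * ‖f‖ := by
        refine Finset.sum_le_sum fun y _ => Finset.sum_le_sum fun b _ => ?_
        rw [abs_mul, abs_of_nonneg (mul_nonneg (hP0 _ _ _) (hμ0 _ _))]
        exact mul_le_mul_of_nonneg_left
          ((Real.norm_eq_abs _ ▸ norm_le_pi_norm f (y, b)))
          (mul_nonneg (hP0 _ _ _) (hμ0 _ _))
    _ = ‖f‖ := by
        have : ∀ y : X, ∑ b : A, P p.1 p.2 y * μ y b * ‖f‖ = P p.1 p.2 y * ‖f‖ := by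
          intro y
          rw [← Finset.sum_mul, ← Finset.mul_sum, hμ1, mul_one]
        simp_rw [this, ← Finset.sum_mul, hP1, one_mul]

lemma pop_iter_norm_le (P : X → A → X → ℝ)
    (hP0 : ∀ x a y, 0 ≤ P x a y) (hP1 : ∀ x a, ∑ y : X, P x a y = 1)
    (μ : X → A → ℝ)
    (hμ0 : ∀ x a, 0 ≤ μ x a) (hμ1 : ∀ x, ∑ a : A, μ x a = 1)
    (t : ℕ) (f : X × A → ℝ) : ‖(Pop P μ)^[t] f‖ ≤ ‖f‖ := by
  induction t with
  | zero => simp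
  | succ n ih =>
    rw [Function.iterate_succ_apply']
    exact (pop_norm_le P hP0 hP1 μ hμ0 hμ1 _).trans ih

lemma abs_ciSup_sub_le (f g : A → ℝ) (c : ℝ) (hc : ∀ b, |f b - g b| ≤ c) :
    |(⨆ b, f b) - (⨆ b, g b)| ≤ c := by
  rw [abs_sub_le_iff]
  constructor
  · rw [sub_le_iff_le_add]
    refine ciSup_le fun b => ?_
    have h1 : f b ≤ g b + c := by have := (abs_le.1 (hc b)).2; linarith
    have h2 := le_ciSup (Set.Finite.bddAbove (Set.finite_range g)) b
    linarith
  · rw [sub_le_iff_le_add]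
    refine ciSup_le fun b => ?_
    have h1 : g b ≤ f b + c := by have := (abs_le.1 (hc b)).1; linarith
    have h2 := le_ciSup (Set.Finite.bddAbove (Set.finite_range f)) b
    linarith

end aux


section aux2
variable {X A : Type*} [Fintype X] [Fintype A] [Nonempty X] [Nonempty A]

lemma topt_contract (P : X → A → X → ℝ)
    (hP0 : ∀ x a y, 0 ≤ P x a y) (hP1 : ∀ x a, ∑ y : X, P x a y = 1)
    (γ : ℝ) (hγ0 : 0 ≤ γ) (r : X × A → ℝ) (Q Q' : X × A → ℝ) :
    ‖Topt P γ r Q - Topt P γ r Q'‖ ≤ γ * ‖Q - Q'‖ := by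
  rw [pi_norm_le_iff_of_nonneg (by positivity)]
  intro p
  rw [Pi.sub_apply, Real.norm_eq_abs]
  have hdiff : (Topt P γ r Q) p - (Topt P γ r Q') p
      = γ * ∑ y : X, P p.1 p.2 y * ((⨆ b : A, Q (y, b)) - (⨆ b : A, Q' (y, b))) := by
    simp only [Topt, mul_sub, Finset.sum_sub_distrib]
    ring
  rw [hdiff, abs_mul, abs_of_nonneg hγ0]
  refine mul_le_mul_of_nonneg_left ?_ hγ0
  calc |∑ y : X, P p.1 p.2 y * ((⨆ b : A, Q (y, b)) - (⨆ b : A, Q' (y, b)))|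
      ≤ ∑ y : X, |P p.1 p.2 y * ((⨆ b : A, Q (y, b)) - (⨆ b : A, Q' (y, b)))| :=
        Finset.abs_sum_le_sum_abs _ _
    _ ≤ ∑ y : X, P p.1 p.2 y * ‖Q - Q'‖ := by
        refine Finset.sum_le_sum fun y _ => ?_
        rw [abs_mul, abs_of_nonneg (hP0 _ _ _)]
        refine mul_le_mul_of_nonneg_left ?_ (hP0 _ _ _)
        refine abs_ciSup_sub_le _ _ _ fun b => ?_
        have := norm_le_pi_norm (Q - Q') (y, b)
        simpa [Real.norm_eq_abs] using this
    _ = ‖Q - Q'‖ := by rw [← Finset.sum_mul, hP1, one_mul]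

end aux2

/-- Lemma 2 bound: `‖R*_λ Q − Q*‖ ≤ (γ + λγ)/(1 − λγ) ‖Q − Q*‖`. -/
theorem stmt13 {X A : Type*} [Fintype X] [Fintype A] [Nonempty X] [Nonempty A]
    (P : X → A → X → ℝ)
    (hP0 : ∀ x a y, 0 ≤ P x a y) (hP1 : ∀ x a, ∑ y : X, P x a y = 1)
    (μ : X → A → ℝ)
    (hμ0 : ∀ x a, 0 ≤ μ x a) (hμ1 : ∀ x, ∑ a : A, μ x a = 1)
    (γ : ℝ) (hγ0 : 0 ≤ γ) (hγ1 : γ < 1)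
    (lam : ℝ) (hl0 : 0 ≤ lam) (hl1 : lam ≤ 1) (hlg : lam * γ < 1)
    (r : X × A → ℝ) (Qstar : X × A → ℝ)
    (hQstar : Topt P γ r Qstar = Qstar)
    (Q : X × A → ℝ) :
    ‖Rstar P μ γ lam r Q - Qstar‖ ≤ (γ + lam * γ) / (1 - lam * γ) * ‖Q - Qstar‖ := by
  set c : ℝ := lam * γ with hcdef
  have hc0 : 0 ≤ c := mul_nonneg hl0 hγ0
  set h : X × A → ℝ := Q - Qstar with hhdef
  set g : X × A → ℝ := Topt P γ r Q - Qstar with hgdef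
  have hgnorm : ‖g‖ ≤ γ * ‖h‖ := by
    rw [hgdef, hhdef]
    calc ‖Topt P γ r Q - Qstar‖ = ‖Topt P γ r Q - Topt P γ r Qstar‖ := by rw [hQstar]
      _ ≤ γ * ‖Q - Qstar‖ := topt_contract P hP0 hP1 γ hγ0 r Q Qstar
  have hTQ : Topt P γ r Q - Q = g - h := by rw [hgdef, hhdef]; abel
  have hterm : ∀ (f : X × A → ℝ) (t : ℕ), ‖c ^ t • (Pop P μ)^[t] f‖ ≤ c ^ t * ‖f‖ := by
    intro f t
    rw [norm_smul, Real.norm_eq_abs, abs_of_nonneg (pow_nonneg hc0 t)]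
    exact mul_le_mul_of_nonneg_left (pop_iter_norm_le P hP0 hP1 μ hμ0 hμ1 t f)
      (pow_nonneg hc0 t)
  have hgeo : ∀ (f : X × A → ℝ), Summable (fun t : ℕ => c ^ t • (Pop P μ)^[t] f) := by
    intro f
    refine Summable.of_norm_bounded
      ((summable_geometric_of_lt_one hc0 hlg).mul_right _) (hterm f)
  have sumg := hgeo g
  have sumh := hgeo h
  -- rewrite Rstar - Qstar
  have key : Rstar P μ γ lam r Q - Qstar
      = (∑' t : ℕ, c ^ t • (Pop P μ)^[t] g)
        - (∑' t : ℕ, c ^ (t + 1) • (Pop P μ)^[t + 1] h) := by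
    have hsplit : (∑' t : ℕ, c ^ t • (Pop P μ)^[t] (Topt P γ r Q - Q))
        = (∑' t : ℕ, c ^ t • (Pop P μ)^[t] g) - (∑' t : ℕ, c ^ t • (Pop P μ)^[t] h) := by
      rw [← Summable.tsum_sub sumg sumh]
      congr 1
      funext t
      rw [hTQ, pop_iter_sub, smul_sub]
    have hshift : (∑' t : ℕ, c ^ t • (Pop P μ)^[t] h)
        = h + ∑' t : ℕ, c ^ (t + 1) • (Pop P μ)^[t + 1] h := by
      rw [Summable.tsum_eq_zero_add sumh]
      simp
    rw [Rstar, hsplit, hshift]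
    rw [hhdef]
    abel
  rw [key]
  have bound1 : ‖∑' t : ℕ, c ^ t • (Pop P μ)^[t] g‖ ≤ (1 - c)⁻¹ * ‖g‖ := by
    refine tsum_of_norm_bounded ?_ (hterm g)
    exact (hasSum_geometric_of_lt_one hc0 hlg).mul_right _
  have bound2 : ‖∑' t : ℕ, c ^ (t + 1) • (Pop P μ)^[t + 1] h‖ ≤ (1 - c)⁻¹ * (c * ‖h‖) := by
    have hs : HasSum (fun t : ℕ => c ^ (t + 1) * ‖h‖) ((1 - c)⁻¹ * (c * ‖h‖)) := by
      have := ((hasSum_geometric_of_lt_one hc0 hlg).mul_right (c * ‖h‖))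
      have e : (fun t : ℕ => c ^ (t + 1) * ‖h‖) = fun i => c ^ i * (c * ‖h‖) :=
        funext fun t => by ring
      rw [e]
      exact this
    exact tsum_of_norm_bounded hs (fun t => hterm h (t + 1))
  have h1c : 0 < 1 - c := by linarith
  calc ‖(∑' t : ℕ, c ^ t • (Pop P μ)^[t] g)
        - (∑' t : ℕ, c ^ (t + 1) • (Pop P μ)^[t + 1] h)‖
      ≤ ‖∑' t : ℕ, c ^ t • (Pop P μ)^[t] g‖
        + ‖∑' t : ℕ, c ^ (t + 1) • (Pop P μ)^[t + 1] h‖ := norm_sub_le _ _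
    _ ≤ (1 - c)⁻¹ * ‖g‖ + (1 - c)⁻¹ * (c * ‖h‖) := add_le_add bound1 bound2
    _ ≤ (1 - c)⁻¹ * (γ * ‖h‖) + (1 - c)⁻¹ * (c * ‖h‖) := by
        have := mul_le_mul_of_nonneg_left hgnorm (le_of_lt (inv_pos.2 h1c))
        linarith
    _ = (γ + c) / (1 - c) * ‖h‖ := by field_simp
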